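/- For two-particle batches ($p = 2$) with Coulomb repulsion in one dimension, the ODE system $\dot{X}^i = \frac{1}{X^i - X^j}$, $\dot{X}^j = \frac{1}{X^j - X^i}$ with $X^i(0) \ne X^j(0)$ has the exact solution over a time step $\tau$: $X^i(\tau) = \frac{1}{2}(X^i(0) + X^j(0)) + \frac{1}{2}\,\mathrm{sgn}(X^i(0) - X^j(0)) \sqrt{|X^i(0)-X^j(0)|^2 + 4\tau}$ and $X^j(\tau) = \frac{1}{2}(X^i(0) + X^j(0)) - \frac{1}{2}\,\mathrm{sgn}(X^i(0) - X^j(0)) \sqrt{|X^i(0)-X^j(0)|^2 + 4\tau}$. In particular the sum $X^i + X^j$ is conserved and $(X^i - X^j)^2$ grows linearly with rate $4$. -/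

import Mathlib

/-- Exact solution of the two-particle Coulomb step in 1D: for
`ẋ = 1/(x - y)`, `ẏ = 1/(y - x)` with `x(0) ≠ y(0)`, at time `τ ≥ 0`
`x(τ) = ½(x(0)+y(0)) + ½ sgn(x(0)-y(0)) √((x(0)-y(0))² + 4τ)` and
`y(τ) = ½(x(0)+y(0)) - ½ sgn(x(0)-y(0)) √((x(0)-y(0))² + 4τ)`; in particular the sum
`x + y` is conserved and `(x - y)²` grows linearly with rate `4`. -/
theorem stmt_11 (x y : ℝ → ℝ) (τ : ℝ) (hτ : 0 ≤ τ)
    (h0 : x 0 ≠ y 0)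
    (hx : ∀ t ∈ Set.Icc 0 τ, HasDerivAt x (1 / (x t - y t)) t)
    (hy : ∀ t ∈ Set.Icc 0 τ, HasDerivAt y (1 / (y t - x t)) t) :
    x τ = (x 0 + y 0) / 2
        + Real.sign (x 0 - y 0) * Real.sqrt ((x 0 - y 0) ^ 2 + 4 * τ) / 2
    ∧ y τ = (x 0 + y 0) / 2
        - Real.sign (x 0 - y 0) * Real.sqrt ((x 0 - y 0) ^ 2 + 4 * τ) / 2
    ∧ (∀ t ∈ Set.Icc 0 τ, x t + y t = x 0 + y 0)
    ∧ (∀ t ∈ Set.Icc 0 τ, (x t - y t) ^ 2 = (x 0 - y 0) ^ 2 + 4 * t) := by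
  set d : ℝ → ℝ := fun t => x t - y t with hd_def
  have hc : d 0 ≠ 0 := sub_ne_zero.mpr h0
  -- derivative of the difference
  have hd : ∀ t ∈ Set.Icc 0 τ, HasDerivAt d (2 / d t) t := by
    intro t ht
    have : HasDerivAt d (1 / (x t - y t) - 1 / (y t - x t)) t := (hx t ht).sub (hy t ht)
    convert this using 1
    rw [show y t - x t = -(x t - y t) by ring, one_div, one_div, inv_neg]
    simp only [hd_def]
    ring
  -- continuity of d on the interval
  have hdc : ContinuousOn d (Set.Icc 0 τ) := fun t ht =>
    ((hd t ht).continuousAt).continuousWithinAt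
  -- conservation of the sum
  have hsum : ∀ t ∈ Set.Icc 0 τ, x t + y t = x 0 + y 0 := by
    have hcont : ContinuousOn (fun t => x t + y t) (Set.Icc 0 τ) := fun t ht =>
      (((hx t ht).add (hy t ht)).continuousAt).continuousWithinAt
    have key : ∀ t ∈ Set.Icc 0 τ, (fun t => x t + y t) t = (fun t => x t + y t) 0 := by
      apply constant_of_has_deriv_right_zero hcont
      intro t ht
      have h1 := (hx t (Set.Ico_subset_Icc_self ht)).add (hy t (Set.Ico_subset_Icc_self ht))
      have h2 : 1 / (x t - y t) + 1 / (y t - x t) = 0 := by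
        rw [show y t - x t = -(x t - y t) by ring, one_div, one_div, inv_neg]; ring
      rw [h2] at h1
      exact h1.hasDerivWithinAt
    exact key
  -- derivative of d² - 4t is zero where d ≠ 0
  have hderiv0 : ∀ t ∈ Set.Icc 0 τ, d t ≠ 0 →
      HasDerivAt (fun t => d t ^ 2 - 4 * t) 0 t := by
    intro t ht hne
    have h1 : HasDerivAt (fun t => d t ^ 2 - 4 * t)
        (2 * d t ^ 1 * (2 / d t) - 4 * 1) t := by
      exact ((hd t ht).pow 2).sub ((hasDerivAt_id t).const_mul 4)
    convert h1 using 1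
    field_simp
    ring
  -- d never vanishes on [0, τ]
  have hnz : ∀ t ∈ Set.Icc 0 τ, d t ≠ 0 := by
    by_contra h
    push_neg at h
    obtain ⟨t₀, ht₀, hz⟩ := h
    set Z : Set ℝ := Set.Icc 0 τ ∩ d ⁻¹' {0} with hZ
    have hZc : IsClosed Z := by
      have := hdc.preimage_isClosed_of_isClosed isClosed_Icc (isClosed_singleton (x := (0:ℝ)))
      exact this
    have hZne : Z.Nonempty := ⟨t₀, ht₀, hz⟩
    have hZbdd : BddBelow Z := ⟨0, fun z hz => hz.1.1⟩
    set T := sInf Z with hT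
    have hTZ : T ∈ Z := hZc.csInf_mem hZne hZbdd
    have hT0 : d T = 0 := hTZ.2
    have hTIcc : T ∈ Set.Icc 0 τ := hTZ.1
    have hTpos : 0 < T := by
      rcases lt_or_eq_of_le hTIcc.1 with h | h
      · exact h
      · exact absurd (h ▸ hT0) hc
    -- on [0, T], d² - 4t is constant
    have hsub : Set.Icc 0 T ⊆ Set.Icc 0 τ :=
      Set.Icc_subset_Icc le_rfl hTIcc.2
    have hne : ∀ t ∈ Set.Ico (0:ℝ) T, d t ≠ 0 := by
      intro t ht hzt
      exact absurd (csInf_le hZbdd ⟨hsub ⟨ht.1, ht.2.le⟩, hzt⟩) (not_le.mpr ht.2)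
    have hcont : ContinuousOn (fun t => d t ^ 2 - 4 * t) (Set.Icc 0 T) :=
      ((hdc.mono hsub).pow 2).sub (continuousOn_const.mul continuousOn_id)
    have key : ∀ t ∈ Set.Icc 0 T,
        (fun t => d t ^ 2 - 4 * t) t = (fun t => d t ^ 2 - 4 * t) 0 := by
      apply constant_of_has_deriv_right_zero hcont
      intro t ht
      exact (hderiv0 t (hsub (Set.Ico_subset_Icc_self ht)) (hne t ht)).hasDerivWithinAt
    have := key T (Set.right_mem_Icc.mpr hTpos.le)
    simp only [hT0] at this
    have : d 0 ^ 2 + 4 * T = 0 := by linarith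
    nlinarith [sq_nonneg (d 0), sq_pos_of_ne_zero hc]
  -- d² grows linearly
  have hsq : ∀ t ∈ Set.Icc 0 τ, d t ^ 2 = d 0 ^ 2 + 4 * t := by
    have hcont : ContinuousOn (fun t => d t ^ 2 - 4 * t) (Set.Icc 0 τ) :=
      (hdc.pow 2).sub (continuousOn_const.mul continuousOn_id)
    have key : ∀ t ∈ Set.Icc 0 τ,
        (fun t => d t ^ 2 - 4 * t) t = (fun t => d t ^ 2 - 4 * t) 0 := by
      apply constant_of_has_deriv_right_zero hcont
      intro t ht
      exact (hderiv0 t (Set.Ico_subset_Icc_self ht)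
        (hnz t (Set.Ico_subset_Icc_self ht))).hasDerivWithinAt
    intro t ht
    have := key t ht
    simp only at this
    linarith
  -- sign is preserved
  have hτmem : τ ∈ Set.Icc (0:ℝ) τ := Set.right_mem_Icc.mpr hτ
  have h0mem : (0:ℝ) ∈ Set.Icc (0:ℝ) τ := Set.left_mem_Icc.mpr hτ
  have habs : |d τ| = Real.sqrt (d 0 ^ 2 + 4 * τ) := by
    rw [← Real.sqrt_sq_eq_abs, hsq τ hτmem]
  have hdτ : d τ = Real.sign (d 0) * Real.sqrt (d 0 ^ 2 + 4 * τ) := by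
    rcases hc.lt_or_gt with hlt | hgt
    · -- d 0 < 0, show d τ < 0
      have hneg : d τ < 0 := by
        rcases lt_or_ge (d τ) 0 with h | h
        · exact h
        · exfalso
          have : (0:ℝ) ∈ Set.Icc (d 0) (d τ) := ⟨hlt.le, h⟩
          obtain ⟨t, htmem, htz⟩ := intermediate_value_Icc hτ hdc this
          exact hnz t htmem htz
      rw [Real.sign_of_neg hlt, ← habs, abs_of_neg hneg]; ring
    · have hpos : 0 < d τ := by
        rcases lt_or_ge 0 (d τ) with h | h
        · exact h
        · exfalso
          have : (0:ℝ) ∈ Set.Icc (d τ) (d 0) := ⟨h, hgt.le⟩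
          obtain ⟨t, htmem, htz⟩ := intermediate_value_Icc' hτ hdc this
          exact hnz t htmem htz
      rw [Real.sign_of_pos hgt, ← habs, abs_of_pos hpos]; ring
  have hsτ : x τ + y τ = x 0 + y 0 := hsum τ hτmem
  refine ⟨?_, ?_, hsum, hsq⟩
  · have : d τ = x τ - y τ := rfl
    simp only [hd_def] at hdτ
    linarith
  · simp only [hd_def] at hdτ
    linarith
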